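/- Let k ≥ 3 and 4 ≤ D ≤ k be integers, let Ω be the soliton distribution with maximum degree D. Let s be an integer with 1 ≤ s such that 4 ≤ ⌈κ(s)⌉ ≤ D, and let n be an integer with n ≥ 68k. Then C(k,s)·e^{−nΣ_s} ≤ (s/k)^{2s}; in particular C(k,s)·e^{−nΣ_s} ≤ k^{−s} if s ≤ √k, and C(k,s)·e^{−nΣ_s} ≤ 2^{−2√k} if √k < s ≤ k/2. -/

import Mathlib

open Finset Real

/-- The soliton distribution with maximum degree `D`:
`Ω_1 = 1/D`, `Ω_d = 1/(d(d−1))` for `2 ≤ d ≤ D`, and `Ω_d = 0` otherwise. -/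
noncomputable def soliton (D d : ℕ) : ℝ :=
  if d = 1 then 1 / (D : ℝ)
  else if 2 ≤ d ∧ d ≤ D then 1 / ((d : ℝ) * ((d : ℝ) - 1))
  else 0

/-- `⌈κ(s)⌉` where `κ(s) = (k−s+1)/(2s+1)`. -/
noncomputable def kappaCeil (k s : ℕ) : ℕ := ⌈(((k : ℝ) - s + 1) / (2 * s + 1))⌉₊

/-- `Σ_s = (1/5)·Σ_{d=⌈κ(s)⌉}^{k−⌈κ(s)⌉} Ω_d
      + (2s/5)·( Σ_{d=1}^{⌈κ(s)⌉−1} d·Ω_d/(k−d+1)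
               + Σ_{d=k−⌈κ(s)⌉+1}^{k} (k−d)·Ω_d/(d+1) )`. -/
noncomputable def SigmaS (k : ℕ) (Ω : ℕ → ℝ) (s : ℕ) : ℝ :=
  (1 / 5) * (∑ d ∈ Finset.Icc (kappaCeil k s) (k - kappaCeil k s), Ω d) +
    (2 * s / 5) *
      ((∑ d ∈ Finset.Icc 1 (kappaCeil k s - 1), (d : ℝ) * Ω d / ((k : ℝ) - d + 1)) +
        ∑ d ∈ Finset.Icc (k - kappaCeil k s + 1) k, ((k : ℝ) - d) * Ω d / ((d : ℝ) + 1))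

set_option maxHeartbeats 2000000

lemma soliton_nonneg (D d : ℕ) : 0 ≤ soliton D d := by
  unfold soliton
  split_ifs with h1 h2
  · positivity
  · have : (2:ℝ) ≤ (d:ℝ) := by exact_mod_cast h2.1
    have : (0:ℝ) < (d:ℝ) * ((d:ℝ) - 1) := by nlinarith
    positivity
  · exact le_refl _

lemma sum_inv_Icc_ge_log (m : ℕ) :
    Real.log (m + 1) ≤ ∑ j ∈ Finset.Icc 1 m, (j : ℝ)⁻¹ := by
  have h := log_add_one_le_harmonic m
  have h2 : ((harmonic m : ℚ) : ℝ) = ∑ j ∈ Finset.Icc 1 m, (j : ℝ)⁻¹ := by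
    rw [harmonic_eq_sum_Icc]; push_cast; ring
  rw [h2] at h
  exact_mod_cast h

lemma numeric_aux (s L X : ℝ) (hs : 1 ≤ s) (hL : 1 ≤ L) (hX : X ≤ 1.3862944 + L) :
    3 * s * X + s ≤ 136 / 5 * s * L := by
  nlinarith [mul_le_mul_of_nonneg_left hL (by linarith : (0:ℝ) ≤ 121/5 * s),
    mul_le_mul_of_nonneg_left hX (by linarith : (0:ℝ) ≤ 3 * s)]

theorem stmt4 (k D : ℕ) (hk : 3 ≤ k) (hD4 : 4 ≤ D) (hDk : D ≤ k)
    (s : ℕ) (hs1 : 1 ≤ s) (hκ4 : 4 ≤ kappaCeil k s) (hκD : kappaCeil k s ≤ D)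
    (n : ℕ) (hn : 68 * k ≤ n) :
    (k.choose s : ℝ) * Real.exp (-(n : ℝ) * SigmaS k (soliton D) s) ≤
        ((s : ℝ) / k) ^ (2 * s) ∧
    ((s : ℝ) ≤ Real.sqrt k →
      (k.choose s : ℝ) * Real.exp (-(n : ℝ) * SigmaS k (soliton D) s) ≤ ((k : ℝ) ^ s)⁻¹) ∧
    (Real.sqrt k < (s : ℝ) → 2 * s ≤ k →
      (k.choose s : ℝ) * Real.exp (-(n : ℝ) * SigmaS k (soliton D) s) ≤
        (2 : ℝ) ^ (-2 * Real.sqrt k)) := by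
  set κ := kappaCeil k s with hκdef
  set Sg := SigmaS k (soliton D) s with hSgdef
  have hs0 : (0:ℝ) < s := by exact_mod_cast hs1
  have hs1R : (1:ℝ) ≤ (s:ℝ) := by exact_mod_cast hs1
  have hk0 : (0:ℝ) < k := by positivity
  have hκk : κ ≤ k := le_trans hκD hDk
  have hκ4R : (4:ℝ) ≤ (κ:ℝ) := by exact_mod_cast hκ4
  -- k ≤ 3 κ s
  have hceil : ((k:ℝ) - s + 1) / (2 * s + 1) ≤ (κ:ℝ) := Nat.le_ceil _
  have h2s1 : (0:ℝ) < 2 * (s:ℝ) + 1 := by positivity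
  have hk3κs : (k:ℝ) ≤ 3 * κ * s := by
    rw [div_le_iff₀ h2s1] at hceil
    nlinarith [mul_nonneg (by linarith : (0:ℝ) ≤ (κ:ℝ) - 1) (by linarith : (0:ℝ) ≤ (s:ℝ) - 1)]
  set L := Real.log ((κ:ℝ) - 1) with hLdef
  have hL1 : (1:ℝ) ≤ L := by
    rw [hLdef, Real.le_log_iff_exp_le (by linarith)]
    have := Real.exp_one_lt_d9
    linarith
  -- bound on log(k/s)
  have hks_pos : (0:ℝ) < (k:ℝ) / s := by positivity
  have hlogks : Real.log ((k:ℝ)/s) ≤ Real.log 4 + L := by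
    have h1 : (k:ℝ)/s ≤ 4 * ((κ:ℝ) - 1) := by
      rw [div_le_iff₀ hs0]
      nlinarith
    calc Real.log ((k:ℝ)/s) ≤ Real.log (4 * ((κ:ℝ) - 1)) :=
          Real.log_le_log hks_pos h1
      _ = Real.log 4 + L := Real.log_mul (by norm_num) (by linarith)
  have hlog4 : Real.log 4 ≤ 1.3862944 := by
    have h2 : Real.log 4 = 2 * Real.log 2 := by
      rw [show (4:ℝ) = 2^2 by norm_num, Real.log_pow]; push_cast; ring
    have := Real.log_two_lt_d9
    rw [h2]; linarith
  -- the middle sum lower bound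
  have hA : L / k ≤ ∑ d ∈ Finset.Icc 1 (κ - 1), (d : ℝ) * soliton D d / ((k : ℝ) - d + 1) := by
    have hpos : ∀ d ∈ Finset.Icc 1 (κ - 1), 0 ≤ (d : ℝ) * soliton D d / ((k : ℝ) - d + 1) := by
      intro d hd
      simp only [Finset.mem_Icc] at hd
      have hdk : (d:ℝ) ≤ (k:ℝ) := by
        have : d ≤ k := le_trans hd.2 (le_trans (Nat.sub_le _ _) hκk)
        exact_mod_cast this
      have h1 : (0:ℝ) < (k:ℝ) - d + 1 := by linarith
      have := soliton_nonneg D d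
      positivity
    have hstep1 : L / k ≤ ∑ d ∈ Finset.Icc 2 (κ - 1), ((d:ℝ) - 1)⁻¹ * (k:ℝ)⁻¹ := by
      have hre : ∑ d ∈ Finset.Icc 2 (κ - 1), ((d:ℝ) - 1)⁻¹ * (k:ℝ)⁻¹
          = (∑ j ∈ Finset.Icc 1 (κ - 2), (j:ℝ)⁻¹) * (k:ℝ)⁻¹ := by
        rw [← Finset.sum_mul]
        congr 1
        rw [show Finset.Icc 2 (κ-1) = (Finset.Icc 1 (κ-2)).map (addRightEmbedding 1) by
          rw [Finset.map_add_right_Icc]; congr 1 <;> omega]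
        rw [Finset.sum_map]
        apply Finset.sum_congr rfl
        intro j hj
        simp only [addRightEmbedding_apply]
        push_cast; ring
      rw [hre]
      have hlog : L ≤ ∑ j ∈ Finset.Icc 1 (κ - 2), (j:ℝ)⁻¹ := by
        have := sum_inv_Icc_ge_log (κ - 2)
        have hcast : ((κ:ℝ) - 2) + 1 = ((κ - 2 : ℕ) : ℝ) + 1 := by
          have : (2:ℕ) ≤ κ := by omega
          push_cast [Nat.cast_sub this]; ring
        rw [hLdef, show (κ:ℝ) - 1 = ((κ:ℝ) - 2) + 1 by ring, hcast]
        exact this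
      rw [div_eq_mul_inv]
      exact mul_le_mul_of_nonneg_right hlog (by positivity)
    refine le_trans hstep1 ?_
    refine le_trans (Finset.sum_le_sum ?_) (Finset.sum_le_sum_of_subset_of_nonneg
      (Finset.Icc_subset_Icc (by omega) le_rfl) (fun d hd _ => hpos d hd))
    intro d hd
    simp only [Finset.mem_Icc] at hd
    have hd2 : (2:ℝ) ≤ (d:ℝ) := by exact_mod_cast hd.1
    have hdD : d ≤ D := by omega
    have hdk : (d:ℝ) ≤ (k:ℝ) - 1 := by
      have : d ≤ k - 1 := by omega
      have h := (Nat.cast_le (α := ℝ)).mpr this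
      rw [Nat.cast_sub (by omega)] at h
      simpa using h
    have hsol : soliton D d = 1 / ((d:ℝ) * ((d:ℝ) - 1)) := by
      unfold soliton
      rw [if_neg (by omega), if_pos ⟨hd.1, hdD⟩]
    rw [hsol]
    have hkd : (0:ℝ) < (k:ℝ) - d + 1 := by linarith
    have hkd2 : (k:ℝ) - d + 1 ≤ (k:ℝ) := by linarith
    have hRHS : (d:ℝ) * (1/((d:ℝ)*((d:ℝ)-1))) / ((k:ℝ)-d+1)
        = (((d:ℝ)-1) * ((k:ℝ)-d+1))⁻¹ := by
      have hd0 : (d:ℝ) ≠ 0 := by linarith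
      have hd1 : (d:ℝ) - 1 ≠ 0 := by linarith
      have hk1 : (k:ℝ) - d + 1 ≠ 0 := ne_of_gt (by linarith)
      field_simp
    rw [hRHS, ← mul_inv]
    apply inv_anti₀ (by nlinarith)
    exact mul_le_mul_of_nonneg_left hkd2 (by linarith)
  -- Sg lower bound
  have hSg : 2 * (s:ℝ) / 5 * (L / k) ≤ Sg := by
    rw [hSgdef]
    unfold SigmaS
    rw [← hκdef]
    have h1 : (0:ℝ) ≤ (1/5) * ∑ d ∈ Finset.Icc κ (k - κ), soliton D d := by
      apply mul_nonneg (by norm_num)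
      exact Finset.sum_nonneg fun d _ => soliton_nonneg D d
    have h3 : (0:ℝ) ≤ ∑ d ∈ Finset.Icc (k - κ + 1) k, ((k:ℝ) - d) * soliton D d / ((d:ℝ) + 1) := by
      apply Finset.sum_nonneg
      intro d hd
      simp only [Finset.mem_Icc] at hd
      have hdk : (d:ℝ) ≤ (k:ℝ) := by exact_mod_cast hd.2
      have := soliton_nonneg D d
      have hd1 : (0:ℝ) < (d:ℝ) + 1 := by positivity
      apply div_nonneg (mul_nonneg (by linarith) this) (by linarith)
    have h2 : 2 * (s:ℝ) / 5 * (L / k) ≤ (2 * s / 5) *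
        ((∑ d ∈ Finset.Icc 1 (κ - 1), (d : ℝ) * soliton D d / ((k : ℝ) - d + 1)) +
          ∑ d ∈ Finset.Icc (k - κ + 1) k, ((k : ℝ) - d) * soliton D d / ((d : ℝ) + 1)) := by
      apply mul_le_mul_of_nonneg_left _ (by positivity)
      linarith [hA]
    linarith
  -- key exponent inequality
  have hnR : 68 * (k:ℝ) ≤ (n:ℝ) := by exact_mod_cast hn
  have hSg0 : (0:ℝ) ≤ 2 * (s:ℝ) / 5 * (L / k) := by positivity
  have hnSg : 136 / 5 * (s:ℝ) * L ≤ (n:ℝ) * Sg := by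
    have := mul_le_mul hnR hSg hSg0 (by positivity : (0:ℝ) ≤ (n:ℝ))
    calc 136 / 5 * (s:ℝ) * L = 68 * (k:ℝ) * (2 * (s:ℝ) / 5 * (L / k)) := by
          field_simp; ring
      _ ≤ (n:ℝ) * Sg := this
  have key : 3 * (s:ℝ) * Real.log ((k:ℝ)/s) + s ≤ (n:ℝ) * Sg := by
    have h1 := numeric_aux (s:ℝ) L (Real.log ((k:ℝ)/s)) hs1R hL1 (by linarith)
    linarith
  -- main inequality (part 1)
  have hmain : (k.choose s : ℝ) * Real.exp (-(n : ℝ) * Sg) ≤ ((s : ℝ) / k) ^ (2 * s) := by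
    rw [show -(n:ℝ) * Sg = -((n:ℝ) * Sg) by ring, Real.exp_neg, mul_inv_le_iff₀ (Real.exp_pos _)]
    -- choose ≤ (k/s)^s * e^s
    have hfact : (0:ℝ) < (s.factorial : ℝ) := by exact_mod_cast s.factorial_pos
    have hC : (k.choose s : ℝ) ≤ ((k:ℝ)/s)^s * Real.exp s := by
      have h1 : (k.choose s : ℝ) ≤ ((k:ℝ)^s) / (s.factorial : ℝ) := by
        have := Nat.choose_le_pow_div (α := ℝ) s k
        simpa using this
      have h2 : ((s:ℝ))^s / (s.factorial : ℝ) ≤ Real.exp s :=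
        Real.pow_div_factorial_le_exp (s:ℝ) (le_of_lt hs0) s
      have h3 : ((k:ℝ)^s) / (s.factorial : ℝ) ≤ ((k:ℝ)/s)^s * Real.exp s := by
        rw [div_le_iff₀ hfact]
        have h4 : ((k:ℝ)/s)^s * ((s:ℝ)^s) = (k:ℝ)^s := by
          rw [← mul_pow, div_mul_cancel₀ _ (ne_of_gt hs0)]
        have h5 : ((s:ℝ))^s ≤ Real.exp s * (s.factorial : ℝ) := by
          rw [div_le_iff₀ hfact] at h2; linarith
        calc (k:ℝ)^s = ((k:ℝ)/s)^s * ((s:ℝ)^s) := h4.symm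
          _ ≤ ((k:ℝ)/s)^s * (Real.exp s * (s.factorial:ℝ)) :=
              mul_le_mul_of_nonneg_left h5 (by positivity)
          _ = ((k:ℝ)/s)^s * Real.exp s * (s.factorial:ℝ) := by ring
      linarith
    have hexp : ((k:ℝ)/s)^(3*s) * Real.exp s ≤ Real.exp ((n:ℝ) * Sg) := by
      have h1 : ((k:ℝ)/s)^(3*s) = Real.exp ((3*s : ℕ) * Real.log ((k:ℝ)/s)) := by
        rw [Real.exp_nat_mul, Real.exp_log hks_pos]
      rw [h1, ← Real.exp_add]
      apply Real.exp_le_exp.mpr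
      push_cast
      linarith [key]
    have hsplit : ((s:ℝ)/k)^(2*s) * (((k:ℝ)/s)^(3*s) * Real.exp s)
        = ((k:ℝ)/s)^s * Real.exp s := by
      have h1 : ((s:ℝ)/k) * ((k:ℝ)/s) = 1 := by field_simp
      rw [show 3*s = 2*s + s by ring, pow_add, ← mul_assoc, ← mul_assoc, ← mul_pow, h1,
        one_pow, one_mul]
    calc (k.choose s : ℝ) ≤ ((k:ℝ)/s)^s * Real.exp s := hC
      _ = ((s:ℝ)/k)^(2*s) * (((k:ℝ)/s)^(3*s) * Real.exp s) := hsplit.symm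
      _ ≤ ((s:ℝ)/k)^(2*s) * Real.exp ((n:ℝ) * Sg) :=
          mul_le_mul_of_nonneg_left hexp (by positivity)
      _ = ((s:ℝ)/k)^(2*s) * Real.exp ((n:ℝ) * Sg) := by ring
  refine ⟨hmain, ?_, ?_⟩
  · intro hsk
    refine le_trans hmain ?_
    have hk2 : (s:ℝ)^2 ≤ (k:ℝ) := by
      have h1 : (s:ℝ)^2 ≤ Real.sqrt k ^ 2 := by
        apply pow_le_pow_left₀ (le_of_lt hs0) hsk
      rwa [Real.sq_sqrt (by positivity)] at h1
    calc ((s:ℝ)/k)^(2*s) = (((s:ℝ)/k)^2)^s := by rw [← pow_mul]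
      _ ≤ (((k:ℝ))⁻¹)^s := by
          apply pow_le_pow_left₀ (by positivity)
          rw [div_pow, div_le_iff₀ (by positivity : (0:ℝ) < (k:ℝ)^2)]
          calc (s:ℝ)^2 ≤ (k:ℝ) := hk2
            _ = (k:ℝ)⁻¹ * (k:ℝ)^2 := by field_simp
      _ = ((k:ℝ)^s)⁻¹ := by rw [inv_pow]
  · intro hsk h2sk
    refine le_trans hmain ?_
    have h2skR : 2 * (s:ℝ) ≤ (k:ℝ) := by exact_mod_cast h2sk
    have hhalf : (s:ℝ)/k ≤ 1/2 := by
      rw [div_le_div_iff₀ hk0 (by norm_num)]; linarith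
    calc ((s:ℝ)/k)^(2*s) ≤ ((1:ℝ)/2)^(2*s) :=
          pow_le_pow_left₀ (by positivity) hhalf _
      _ = (2:ℝ) ^ (-(2*s : ℕ) : ℝ) := by
          rw [Real.rpow_neg (by norm_num), Real.rpow_natCast]
          rw [one_div, inv_pow]
      _ ≤ (2:ℝ) ^ (-2 * Real.sqrt k) := by
          apply Real.rpow_le_rpow_of_exponent_le (by norm_num)
          have hsq : Real.sqrt k ≤ (s:ℝ) := le_of_lt hsk
          push_cast
          linarith
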